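/- In the allowable multiplicity-type setting, let a ≥ μ be an integer. Then for every error pattern x ∈ {0,1,…,ℓ}^N and every erasure pattern x̂ ∈ {1,…,T}^N, the ASD decoding condition (a+1)·(S − (a/2)(K−1)) > C holds if and only if d_a(x,x̂) < D_a, where D_a = μ(2a+1−μ)·N/(a(a+1)) − K + 1. -/

import Mathlib

open Finset

/-- The minimum of `f` over the finite set `s` of indices, with the convention that the
minimum over the empty set is `0`. -/
def minOv (s : Finset ℕ) (f : ℕ → ℕ) : ℕ :=
  if h : s.Nonempty then s.inf' h f else 0

/-- The multiplicity type `(m 1, …, m ℓ)` is *allowable* for maximum multiplicity `μ`: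
`∑_{j=1}^ℓ m j ≤ μ` and
`∑_{j=1}^ℓ m j (μ - m j) ≤ (μ+1) (#{j : m j ≠ 0} - 1) min_{j : m j ≠ 0} m j`. -/
def Allowable (ℓ μ : ℕ) (m : ℕ → ℕ) : Prop :=
  (∑ j ∈ Finset.Icc 1 ℓ, m j) ≤ μ ∧
    (∑ j ∈ Finset.Icc 1 ℓ, (m j : ℤ) * ((μ : ℤ) - (m j : ℤ)))
      ≤ ((μ : ℤ) + 1) * ((((Finset.Icc 1 ℓ).filter fun j => m j ≠ 0).card : ℤ) - 1)
          * (minOv ((Finset.Icc 1 ℓ).filter fun j => m j ≠ 0) m : ℤ)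

/-- The score `S = ∑_{i : x i ≥ 1} m (x i) (x̂ i)` of an error pattern `x` and an erasure
pattern `x̂` (positions indexed by `i ∈ {1,…,N}`). -/
def score (N : ℕ) (m : ℕ → ℕ → ℕ) (x xhat : ℕ → ℕ) : ℚ :=
  ∑ i ∈ Finset.Icc 1 N, if 1 ≤ x i then (m (x i) (xhat i) : ℚ) else 0

/-- The cost `C = (1/2) ∑_{i=1}^N ∑_{j=1}^ℓ m j (x̂ i) (m j (x̂ i) + 1)`. -/
def cost (N ℓ : ℕ) (m : ℕ → ℕ → ℕ) (xhat : ℕ → ℕ) : ℚ :=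
  (1 / 2) * ∑ i ∈ Finset.Icc 1 N, ∑ j ∈ Finset.Icc 1 ℓ,
    (m j (xhat i) : ℚ) * ((m j (xhat i) : ℚ) + 1)

/-- `ρ_{k,a} = μ(2a+1-μ)/(a(a+1)) + ∑_{j=1}^ℓ m_{j,k}(m_{j,k}+1)/(a(a+1))`. -/
def rho (μ ℓ : ℕ) (m : ℕ → ℕ → ℕ) (a k : ℕ) : ℚ :=
  (μ : ℚ) * (2 * (a : ℚ) + 1 - (μ : ℚ)) / ((a : ℚ) * ((a : ℚ) + 1)) +
    ∑ j ∈ Finset.Icc 1 ℓ, (m j k : ℚ) * ((m j k : ℚ) + 1) / ((a : ℚ) * ((a : ℚ) + 1))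

/-- The distortion measure `δ_a(0,k) = ρ_{k,a}` and `δ_a(j,k) = ρ_{k,a} - 2 m_{j,k}/a`
for `1 ≤ j ≤ ℓ`. -/
def deltaA (μ ℓ : ℕ) (m : ℕ → ℕ → ℕ) (a j k : ℕ) : ℚ :=
  if j = 0 then rho μ ℓ m a k else rho μ ℓ m a k - 2 * (m j k : ℚ) / (a : ℚ)

/-- The distortion `d_a(x, x̂) = ∑_{i=1}^N δ_a(x i, x̂ i)`. -/
def distA (N μ ℓ : ℕ) (m : ℕ → ℕ → ℕ) (a : ℕ) (x xhat : ℕ → ℕ) : ℚ :=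
  ∑ i ∈ Finset.Icc 1 N, deltaA μ ℓ m a (x i) (xhat i)

/-- In the allowable multiplicity-type setting, let `a ≥ μ` be an
integer. Then for every error pattern `x ∈ {0,…,ℓ}^N` and every erasure pattern
`x̂ ∈ {1,…,T}^N`, the ASD decoding condition `(a+1)(S - (a/2)(K-1)) > C` holds iff
`d_a(x,x̂) < D_a`, where `D_a = μ(2a+1-μ)N/(a(a+1)) - K + 1`. -/
theorem stmt_6 (μ ℓ T N K : ℕ) (hμ : 1 ≤ μ) (hℓ : 1 ≤ ℓ) (hT : 1 ≤ T) (hN : 1 ≤ N)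
    (hK : 1 ≤ K) (m : ℕ → ℕ → ℕ)
    (hallow : ∀ k ∈ Finset.Icc 1 T, Allowable ℓ μ (fun j => m j k))
    (htype1 : ∀ j ∈ Finset.Icc 1 ℓ, m j 1 = if j = 1 then μ else 0)
    (a : ℕ) (ha : μ ≤ a)
    (x : ℕ → ℕ) (hx : ∀ i ∈ Finset.Icc 1 N, x i ≤ ℓ)
    (xhat : ℕ → ℕ) (hxhat : ∀ i ∈ Finset.Icc 1 N, xhat i ∈ Finset.Icc 1 T) :
    (cost N ℓ m xhat
        < ((a : ℚ) + 1) * (score N m x xhat - ((a : ℚ) / 2) * ((K : ℚ) - 1)))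
      ↔ distA N μ ℓ m a x xhat
          < (μ : ℚ) * (2 * (a : ℚ) + 1 - (μ : ℚ)) * (N : ℚ) / ((a : ℚ) * ((a : ℚ) + 1))
            - (K : ℚ) + 1 := by
  have ha1 : 1 ≤ a := le_trans hμ ha
  have ha' : (0:ℚ) < (a:ℚ) := by exact_mod_cast ha1
  have ha1' : (0:ℚ) < (a:ℚ) + 1 := by linarith
  have haa : (0:ℚ) < (a:ℚ) * ((a:ℚ) + 1) := mul_pos ha' ha1'
  set S := score N m x xhat with hS
  set C := cost N ℓ m xhat with hC
  have key : distA N μ ℓ m a x xhat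
      = (μ : ℚ) * (2 * (a : ℚ) + 1 - (μ : ℚ)) * (N : ℚ) / ((a : ℚ) * ((a : ℚ) + 1))
        + (2 * C - 2 * ((a : ℚ) + 1) * S) / ((a : ℚ) * ((a : ℚ) + 1)) := by
    have hterm : ∀ i ∈ Finset.Icc 1 N,
        deltaA μ ℓ m a (x i) (xhat i)
          = ((μ : ℚ) * (2 * (a : ℚ) + 1 - (μ : ℚ)) / ((a : ℚ) * ((a : ℚ) + 1))
              + (∑ j ∈ Finset.Icc 1 ℓ, (m j (xhat i) : ℚ) * ((m j (xhat i) : ℚ) + 1))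
                  / ((a : ℚ) * ((a : ℚ) + 1)))
            - 2 / (a : ℚ) * (if 1 ≤ x i then (m (x i) (xhat i) : ℚ) else 0) := by
      intro i _
      have hrho : rho μ ℓ m a (xhat i)
          = (μ : ℚ) * (2 * (a : ℚ) + 1 - (μ : ℚ)) / ((a : ℚ) * ((a : ℚ) + 1))
              + (∑ j ∈ Finset.Icc 1 ℓ, (m j (xhat i) : ℚ) * ((m j (xhat i) : ℚ) + 1))
                  / ((a : ℚ) * ((a : ℚ) + 1)) := by
        unfold rho; rw [Finset.sum_div]
      unfold deltaA
      rcases Nat.eq_zero_or_pos (x i) with h | h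
      · rw [if_pos h, if_neg (by omega : ¬ 1 ≤ x i), hrho]; ring
      · rw [if_neg (Nat.pos_iff_ne_zero.mp h), if_pos (show 1 ≤ x i from h), hrho]; ring
    unfold distA
    rw [Finset.sum_congr rfl hterm, Finset.sum_sub_distrib, Finset.sum_add_distrib,
      Finset.sum_const, Nat.card_Icc, ← Finset.sum_div, ← Finset.mul_sum]
    have hcard : (N + 1 - 1 : ℕ) = N := by omega
    rw [hcard, hS, hC]
    unfold score cost
    push_cast
    rw [nsmul_eq_mul]
    field_simp
    ring
  rw [key]
  set M := (μ : ℚ) * (2 * (a : ℚ) + 1 - (μ : ℚ)) * (N : ℚ) / ((a : ℚ) * ((a : ℚ) + 1))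
  have hEq : (M + (2 * C - 2 * ((a : ℚ) + 1) * S) / ((a : ℚ) * ((a : ℚ) + 1))
      < M - (K : ℚ) + 1)
      ↔ (2 * C - 2 * ((a : ℚ) + 1) * S) / ((a : ℚ) * ((a : ℚ) + 1)) < 1 - (K : ℚ) := by
    constructor <;> intro h <;> linarith
  rw [hEq, div_lt_iff₀ haa]
  constructor <;> intro h <;> nlinarith [h]
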